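/- Let g, g' ∈ Sol have nonzero z-coordinates z, z' and suppose p⁺(g) ≠ p⁺(g'), where p⁺(z,x,y) = x/(1 − e^{-z}). Then the group generated by g and g' acts properly on ℝ via the affine action (z,x,y)·ξ = x + e^{-z}ξ, i.e., every orbit of this group is infinite. -/

import Mathlib

/-- The group `Sol = ℝ ⋉ ℝ²`, elements written `(z, x, y)`, with multiplication
`(z,x,y)(z',x',y') = (z+z', x+e^{-z}x', y+e^{z}y')`. -/
@[ext] structure Sol where
  z : ℝ
  x : ℝ
  y : ℝ

namespace Sol

noncomputable instance : Mul Sol :=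
  ⟨fun g h => ⟨g.z + h.z, g.x + Real.exp (-g.z) * h.x, g.y + Real.exp g.z * h.y⟩⟩

instance : One Sol := ⟨⟨0, 0, 0⟩⟩

noncomputable instance : Inv Sol :=
  ⟨fun g => ⟨-g.z, -(Real.exp g.z * g.x), -(Real.exp (-g.z) * g.y)⟩⟩

@[simp] lemma mul_def (g h : Sol) :
    g * h = ⟨g.z + h.z, g.x + Real.exp (-g.z) * h.x, g.y + Real.exp g.z * h.y⟩ := rfl

@[simp] lemma one_def : (1 : Sol) = ⟨0, 0, 0⟩ := rfl

@[simp] lemma inv_def (g : Sol) :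
    g⁻¹ = ⟨-g.z, -(Real.exp g.z * g.x), -(Real.exp (-g.z) * g.y)⟩ := rfl

noncomputable instance : Group Sol where
  mul_assoc a b c := by
    ext <;> simp [Real.exp_add, neg_add] <;> ring
  one_mul a := by ext <;> simp
  mul_one a := by ext <;> simp
  inv_mul_cancel a := by
    ext <;> simp [← Real.exp_add]

/-- The affine action of `Sol` on the boundary line `ℝ = ∂⁺Sol`:
`(z,x,y)·ξ = x + e^{-z} ξ`. -/
noncomputable def act (g : Sol) (ξ : ℝ) : ℝ := g.x + Real.exp (-g.z) * ξ

end Sol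

/-- The fixed point `p⁺(g) = x/(1 − e^{-z})` of the affine boundary action of
`g = (z,x,y)` with `z ≠ 0`. -/
noncomputable def pPlus (g : Sol) : ℝ := g.x / (1 - Real.exp (-g.z))

/-- If `g, g' ∈ Sol` have nonzero `z`-coordinates and `p⁺(g) ≠ p⁺(g')`, then the
group generated by `g` and `g'` acts properly on `ℝ`: every orbit is infinite. -/

lemma act_pow (h : Sol) (hz : h.z ≠ 0) (ξ : ℝ) (n : ℕ) :
    Sol.act (h ^ n) ξ = pPlus h + (Real.exp (-h.z)) ^ n * (ξ - pPlus h) := by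
  have hne : 1 - Real.exp (-h.z) ≠ 0 := by
    intro hc
    have h1 : Real.exp (-h.z) = 1 := by linarith
    have := Real.exp_injective (h1.trans Real.exp_zero.symm)
    exact hz (neg_eq_zero.mp this)
  have hx : h.x = pPlus h * (1 - Real.exp (-h.z)) := by
    simp only [pPlus]
    rw [div_mul_cancel₀ _ hne]
  induction n with
  | zero => simp [Sol.act]
  | succ n ih =>
    have : h ^ (n + 1) = h * h ^ n := by rw [pow_succ']
    rw [this]
    have hz' : (h * h ^ n).z = h.z + (h ^ n).z := rfl
    have hx' : (h * h ^ n).x = h.x + Real.exp (-h.z) * (h ^ n).x := rfl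
    simp only [Sol.act, hz', hx', neg_add, Real.exp_add]
    have e1 : (h ^ n).x + Real.exp (-(h ^ n).z) * ξ
        = pPlus h + Real.exp (-h.z) ^ n * (ξ - pPlus h) := ih
    linear_combination Real.exp (-h.z) * e1 + hx

lemma key (h : Sol) (hz : h.z ≠ 0) (ξ : ℝ) (hξ : ξ ≠ pPlus h)
    (G : Subgroup Sol) (hG : h ∈ G) :
    (Set.range fun k : G => Sol.act k.1 ξ).Infinite := by
  refine Set.infinite_of_injective_forall_mem
    (f := fun n : ℕ => Sol.act ((h ^ n : Sol)) ξ) ?_ ?_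
  · intro m n hmn
    simp only at hmn
    rw [act_pow h hz, act_pow h hz] at hmn
    have hc : ξ - pPlus h ≠ 0 := sub_ne_zero.mpr hξ
    have : (Real.exp (-h.z)) ^ m = (Real.exp (-h.z)) ^ n := by
      have := add_left_cancel hmn
      exact mul_right_cancel₀ hc this
    rw [← Real.exp_nat_mul, ← Real.exp_nat_mul] at this
    have := Real.exp_injective this
    have hmn' : (m : ℝ) = n := by
      exact mul_right_cancel₀ (neg_ne_zero.mpr hz) this
    exact_mod_cast hmn'
  · intro n
    exact ⟨⟨h ^ n, pow_mem hG n⟩, rfl⟩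

theorem proper_action_of_two_elements (g g' : Sol) (hz : g.z ≠ 0) (hz' : g'.z ≠ 0)
    (hpp : pPlus g ≠ pPlus g') :
    ∀ ξ : ℝ,
      (Set.range fun h : Subgroup.closure {g, g'} => Sol.act h.1 ξ).Infinite := by
  intro ξ
  by_cases hξ : ξ = pPlus g
  · exact key g' hz' ξ (hξ ▸ hpp) _ (Subgroup.subset_closure (by simp))
  · exact key g hz ξ hξ _ (Subgroup.subset_closure (by simp))
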